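/- arXiv:1307.5529 — 5 statements merged into one kernel-verified Lean document; each statement's English description precedes it below -/
import Mathlib

section
/- Let R = D[X;σ,δ] be an Ore extension over a division ring D, and suppose R is generated as a module over its center C by finitely many elements c_1, …, c_r. Then for any nonzero f ∈ R, the twosided annihilator Ann_R(R/Rf) equals the intersection of the left ideals Ann_R(c_i + Rf) for i = 1, …, r. In particular, every nonzero polynomial in R is bounded (its bound ideal is nonzero). -/
/-- An Ore extension `R = D[X;σ,δ]`: `R` is a ring containing `D` via `C`, with a
distinguished element `X`, which is a free left `D`-module on the powers of `X`
(encoded by the coefficient equivalence `e`), subject to `X·a = σ(a)·X + δ(a)`,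
where `δ` is a `σ`-derivation. -/
structure OreExt (D : Type*) [DivisionRing D] (σ : D ≃+* D) (δ : D → D)
    (R : Type*) [Ring R] where
  C : D →+* R
  X : R
  e : R ≃+ (ℕ →₀ D)
  e_symm_single : ∀ (n : ℕ) (d : D), e.symm (Finsupp.single n d) = C d * X ^ n
  X_mul_C : ∀ a : D, X * C a = C (σ a) * X + C (δ a)
  δ_add : ∀ a b : D, δ (a + b) = δ a + δ b
  δ_mul : ∀ a b : D, δ (a * b) = σ a * δ b + δ a * b

namespace OreExt

variable {D R : Type*} [DivisionRing D] [Ring R] {σ : D ≃+* D} {δ : D → D}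

/-- Degree, with `deg 0 = ⊥` (i.e. `-∞`). -/
noncomputable def deg (O : OreExt D σ δ R) (f : R) : WithBot ℕ := (O.e f).support.max

/-- Degree as a natural number (`0` for the zero polynomial). -/
noncomputable def ndeg (O : OreExt D σ δ R) (f : R) : ℕ := WithBot.unbotD 0 ((O.e f).support.max)

/-- Leading coefficient. -/
noncomputable def lc (O : OreExt D σ δ R) (f : R) : D := O.e f (O.ndeg f)

/-- `f` is irreducible: it has positive degree and in any factorization one of the two
factors is a constant (an element of `D`). -/
def IrreducibleOre (O : OreExt D σ δ R) (f : R) : Prop :=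
  0 < O.ndeg f ∧ ∀ g h : R, f = g * h → (∃ d : D, g = O.C d) ∨ (∃ d : D, h = O.C d)

end OreExt

/-- A left ideal is twosided. -/
def IsTwoSidedIdeal' {R : Type*} [Ring R] (I : Ideal R) : Prop :=
  ∀ x ∈ I, ∀ r : R, x * r ∈ I

/-- `b` is a bound of `f`: the left ideal `Rb` is twosided and is the largest twosided
ideal contained in `Rf`. -/
def IsBound {R : Type*} [Ring R] (f b : R) : Prop :=
  Ideal.span {b} ≤ Ideal.span {f} ∧ IsTwoSidedIdeal' (Ideal.span {b}) ∧
    ∀ J : Ideal R, IsTwoSidedIdeal' J → J ≤ Ideal.span {f} → J ≤ Ideal.span {b}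

namespace OreExt

variable {D R : Type*} [DivisionRing D] [Ring R] {σ : D ≃+* D} {δ : D → D}

lemma δ_zero (O : OreExt D σ δ R) : δ (0 : D) = 0 := by
  have := O.δ_add 0 0
  simpa using this.symm

lemma e_single (O : OreExt D σ δ R) (n : ℕ) (d : D) :
    O.e (O.C d * O.X ^ n) = Finsupp.single n d := by
  rw [← O.e_symm_single]; exact O.e.apply_symm_apply _

/-- key coefficient formula for multiplication by `X` -/
lemma coeff_X_mul (O : OreExt D σ δ R) (g : R) :
    (∀ k : ℕ, O.e (O.X * g) (k+1) = σ (O.e g k) + δ (O.e g (k+1)))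
    ∧ O.e (O.X * g) 0 = δ (O.e g 0) := by
  have main : ∀ s : ℕ →₀ D,
      (∀ k : ℕ, O.e (O.X * O.e.symm s) (k+1) = σ (s k) + δ (s (k+1)))
      ∧ O.e (O.X * O.e.symm s) 0 = δ (s 0) := by
    intro s
    induction s using Finsupp.induction with
    | zero => simp [O.δ_zero]
    | single_add j a s hj ha ih =>
      have h1 : O.X * O.e.symm (Finsupp.single j a + s)
          = O.X * O.e.symm (Finsupp.single j a) + O.X * O.e.symm s := by
        rw [map_add, mul_add]
      have hsingle : O.X * O.e.symm (Finsupp.single j a)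
          = O.e.symm (Finsupp.single (j+1) (σ a) + Finsupp.single j (δ a)) := by
        rw [O.e_symm_single, map_add, O.e_symm_single, O.e_symm_single,
          ← mul_assoc, O.X_mul_C, add_mul, mul_assoc, ← pow_succ']
      have h2 : O.e (O.X * O.e.symm (Finsupp.single j a + s))
          = (Finsupp.single (j+1) (σ a) + Finsupp.single j (δ a))
            + O.e (O.X * O.e.symm s) := by
        rw [h1, hsingle, map_add O.e, O.e.apply_symm_apply]
      constructor
      · intro k
        rw [h2]
        simp only [Finsupp.add_apply, ih.1 k]
        simp only [Finsupp.single_apply]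
        rw [show ((if j + 1 = k + 1 then σ a else 0) : D) = σ (if j = k then a else 0) by
              split_ifs with h h' h' <;> simp_all [map_zero],
            show ((if j = k + 1 then δ a else 0) : D) = δ (if j = k+1 then a else 0) by
              split_ifs <;> simp [O.δ_zero]]
        rw [map_add σ, O.δ_add]
        abel
      · rw [h2]
        simp only [Finsupp.add_apply, ih.2]
        simp only [Finsupp.single_apply]
        simp only [Nat.succ_ne_zero, if_false, zero_add]
        rw [show ((if j = 0 then δ a else 0) : D) = δ (if j = 0 then a else 0) by
              split_ifs <;> simp [O.δ_zero]]
        rw [← O.δ_add]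
  refine ⟨fun k => ?_, ?_⟩
  · have := (main (O.e g)).1 k
    rwa [O.e.symm_apply_apply] at this
  · have := (main (O.e g)).2
    rwa [O.e.symm_apply_apply] at this

lemma coeff_C_mul (O : OreExt D σ δ R) (b : D) (g : R) (k : ℕ) :
    O.e (O.C b * g) k = b * O.e g k := by
  have main : ∀ s : ℕ →₀ D, O.e (O.C b * O.e.symm s) k = b * s k := by
    intro s
    induction s using Finsupp.induction with
    | zero => simp
    | single_add j a s hj ha ih =>
      rw [map_add, mul_add, map_add O.e, Finsupp.add_apply, ih, O.e_symm_single, ← mul_assoc,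
        ← map_mul, O.e_single]
      simp only [Finsupp.add_apply, Finsupp.single_apply]
      rw [mul_add]
      congr 1
      split_ifs <;> simp
  have := main (O.e g)
  rwa [O.e.symm_apply_apply] at this

lemma sigma_iter_ne_zero (k : ℕ) {a : D} (ha : a ≠ 0) : (⇑σ)^[k] a ≠ 0 := by
  induction k with
  | zero => simpa using ha
  | succ k ih =>
    rw [Function.iterate_succ_apply']
    intro h0
    exact ih (σ.injective (by rw [h0, map_zero]))

lemma coeff_X_pow_mul (O : OreExt D σ δ R) (g : R) (t k : ℕ)
    (h : ∀ j, t < j → O.e g j = 0) :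
    (∀ j, t + k < j → O.e (O.X ^ k * g) j = 0) ∧
      O.e (O.X ^ k * g) (t + k) = (⇑σ)^[k] (O.e g t) := by
  induction k with
  | zero =>
    constructor
    · intro j hj
      simpa using h j (by simpa using hj)
    · simp
  | succ k ih =>
    have hp : O.X ^ (k+1) * g = O.X * (O.X ^ k * g) := by
      rw [pow_succ', mul_assoc]
    constructor
    · intro j hj
      match j, hj with
      | (j'+1), hj =>
        rw [hp, (O.coeff_X_mul (O.X ^ k * g)).1 j', ih.1 j' (by omega), ih.1 (j'+1) (by omega),
          map_zero, O.δ_zero, add_zero]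
    · rw [show t + (k+1) = (t+k) + 1 by omega, hp, (O.coeff_X_mul (O.X ^ k * g)).1 (t+k),
        ih.2, ih.1 (t+k+1) (by omega), O.δ_zero, add_zero]
      exact (Function.iterate_succ_apply' _ _ _).symm

lemma ndeg_spec (O : OreExt D σ δ R) {g : R} (h : g ≠ 0) :
    O.e g (O.ndeg g) ≠ 0 ∧ ∀ j, O.ndeg g < j → O.e g j = 0 := by
  set s := O.e g with hs
  have hsne : s ≠ 0 := fun h0 => h (by
    have := congrArg O.e.symm h0
    rwa [O.e.symm_apply_apply, map_zero] at this)
  have hne : s.support.Nonempty := Finsupp.support_nonempty_iff.mpr hsne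
  have hmax : s.support.max = (s.support.max' hne : ℕ) := (Finset.coe_max' hne).symm
  have hnd : O.ndeg g = s.support.max' hne := by
    rw [ndeg, ← hs, hmax]
    rfl
  rw [hnd]
  constructor
  · exact Finsupp.mem_support_iff.mp (s.support.max'_mem hne)
  · intro j hj
    by_contra hz
    exact absurd (Finset.le_max' _ j (Finsupp.mem_support_iff.mpr hz)) (not_le.mpr hj)

/-- Left division with remainder by a nonzero `f`. -/
lemma division (O : OreExt D σ δ R) {f : R} (hf : f ≠ 0) (g : R) :
    ∃ q ρ : R, g = q * f + ρ ∧ ∀ j, O.ndeg f ≤ j → O.e ρ j = 0 := by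
  set n := O.ndeg f with hn
  obtain ⟨hfn, hftop⟩ := O.ndeg_spec hf
  suffices H : ∀ m (g : R), (∀ j, m ≤ j → O.e g j = 0) →
      ∃ q ρ : R, g = q * f + ρ ∧ ∀ j, n ≤ j → O.e ρ j = 0 by
    by_cases hg : g = 0
    · exact H 0 g (fun j _ => by simp [hg, map_zero])
    · exact H (O.ndeg g + 1) g (fun j hj => (O.ndeg_spec hg).2 j (by omega))
  intro m
  induction m with
  | zero => exact fun g hg => ⟨0, g, by simp, fun j _ => hg j (Nat.zero_le j)⟩
  | succ m ih =>
    intro g hg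
    by_cases hmn : m < n
    · exact ⟨0, g, by simp, fun j hj => hg j (by omega)⟩
    · push_neg at hmn
      set k := m - n with hk
      set b := O.e g m with hb
      set u := (⇑σ)^[k] (O.e f n) with hu
      have hu0 : u ≠ 0 := sigma_iter_ne_zero k hfn
      set h := O.C (b * u⁻¹) * (O.X ^ k * f) with hh
      have hXkf := O.coeff_X_pow_mul f n k hftop
      have hnk : n + k = m := by omega
      have hhj : ∀ j, m < j → O.e h j = 0 := by
        intro j hj
        rw [hh, O.coeff_C_mul, hXkf.1 j (by omega), mul_zero]
      have hhm : O.e h m = b := by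
        rw [hh, O.coeff_C_mul, ← hnk, hXkf.2, ← hu, mul_assoc, inv_mul_cancel₀ hu0, mul_one]
      have hg' : ∀ j, m ≤ j → O.e (g - h) j = 0 := by
        intro j hj
        rw [map_sub O.e, Finsupp.sub_apply]
        rcases eq_or_lt_of_le hj with hj' | hj'
        · rw [← hj', hhm, ← hb, sub_self]
        · rw [hg j (by omega), hhj j hj', sub_self]
      obtain ⟨q, ρ, hqρ, hρ⟩ := ih (g - h) hg'
      refine ⟨q + O.C (b * u⁻¹) * O.X ^ k, ρ, ?_, hρ⟩
      have : g = (g - h) + h := by abel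
      rw [this, hqρ, add_mul, mul_assoc, ← hh]
      abel

end OreExt

/-- if `R` is generated as a module over its center by `c 1, …, c r`,
then for nonzero `f` the two-sided annihilator of `R/Rf` is the intersection of the
annihilators of the `c i + Rf`, and it is nonzero (every nonzero polynomial is
bounded). -/
theorem bound_eq_inter_annihilators {D R : Type*} [DivisionRing D] [Ring R]
    (σ : D ≃+* D) (δ : D → D) (O : OreExt D σ δ R) (r : ℕ) (c : Fin r → R)
    (hgen : Submodule.span (Subring.center R) (Set.range c) = ⊤)
    (f : R) (hf : f ≠ 0) :
    {g : R | ∀ x : R, g * x ∈ Ideal.span {f}} =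
        ⋂ i, {g : R | g * c i ∈ Ideal.span {f}} ∧
      ∃ g : R, g ≠ 0 ∧ ∀ x : R, g * x ∈ Ideal.span {f} := by
  have part1 : {g : R | ∀ x : R, g * x ∈ Ideal.span {f}} =
      ⋂ i, {g : R | g * c i ∈ Ideal.span {f}} := by
    ext g
    simp only [Set.mem_setOf_eq, Set.mem_iInter]
    constructor
    · exact fun h i => h (c i)
    · intro h x
      have hx : x ∈ Submodule.span (Subring.center R) (Set.range c) := by
        rw [hgen]; trivial
      induction hx using Submodule.span_induction with
      | mem x hxm =>
        obtain ⟨i, rfl⟩ := hxm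
        exact h i
      | zero => simp
      | add x y hx hy ihx ihy =>
        rw [mul_add]
        exact Ideal.add_mem _ ihx ihy
      | smul z x hx ihx =>
        have hcomm := (Subring.mem_center_iff.mp z.2) g
        have hz : g * (z • x) = (z : R) * (g * x) := by
          rw [show z • x = (z : R) * x from rfl, ← mul_assoc, hcomm, mul_assoc]
        rw [hz]
        exact Ideal.mul_mem_left _ _ ihx
  refine ⟨part1, ?_⟩
  -- pigeonhole construction of a nonzero annihilator
  set n := O.ndeg f with hn
  set m := n * r with hm
  choose q ρ hdiv hρ using fun (k : Fin (m+1)) (i : Fin r) =>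
    O.division hf (O.X ^ (k : ℕ) * c i)
  let Φ : (Fin (m+1) → D) →ₗ[D] (Fin r → Fin n → D) :=
    { toFun := fun d i j => ∑ k, d k * O.e (ρ k i) (j : ℕ)
      map_add' := by
        intro x y
        funext i j
        simp [add_mul, Finset.sum_add_distrib]
      map_smul' := by
        intro a x
        funext i j
        simp [Finset.mul_sum, mul_assoc] }
  have hnotinj : ¬ Function.Injective Φ := by
    intro hinj
    have h1 := LinearMap.finrank_le_finrank_of_injective hinj
    have h2 : Module.finrank D (Fin (m+1) → D) = m + 1 := by
      rw [Module.finrank_pi]; simp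
    have h3 : Module.finrank D (Fin r → Fin n → D) = r * n := by
      rw [Module.finrank_pi_fintype]
      simp [Module.finrank_pi]
    rw [h2, h3] at h1
    have : m + 1 ≤ m := by rwa [Nat.mul_comm r n, ← hm] at h1
    omega
  obtain ⟨x, y, hxy, hne⟩ := Function.not_injective_iff.mp hnotinj
  set d := x - y with hd
  have hd0 : d ≠ 0 := sub_ne_zero.mpr hne
  have hΦd : Φ d = 0 := by rw [hd, map_sub, hxy, sub_self]
  set g := ∑ k : Fin (m+1), O.C (d k) * O.X ^ (k : ℕ) with hg
  have heg : ∀ k0 : Fin (m+1), O.e g (k0 : ℕ) = d k0 := by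
    intro k0
    rw [hg, map_sum O.e]
    rw [show (∑ k : Fin (m+1), O.e (O.C (d k) * O.X ^ (k : ℕ)))
        = ∑ k : Fin (m+1), Finsupp.single (k : ℕ) (d k) from
      Finset.sum_congr rfl fun k _ => O.e_single _ _]
    rw [Finset.sum_apply']
    rw [Finset.sum_eq_single_of_mem k0 (Finset.mem_univ _)
      (fun k _ hk => by rw [Finsupp.single_apply, if_neg (fun hvk => hk (Fin.val_injective hvk))])]
    simp [Finsupp.single_apply]
  have hg0 : g ≠ 0 := by
    obtain ⟨k0, hk0⟩ := Function.ne_iff.mp hd0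
    intro h0
    apply hk0
    rw [← heg k0, h0, map_zero]
    rfl
  refine ⟨g, hg0, ?_⟩
  have hmem : ∀ i : Fin r, g * c i ∈ Ideal.span {f} := by
   intro i
   have hgc : g * c i = (∑ k : Fin (m+1), O.C (d k) * q k i) * f
       + ∑ k : Fin (m+1), O.C (d k) * ρ k i := by
     rw [hg, Finset.sum_mul, Finset.sum_mul, ← Finset.sum_add_distrib]
     refine Finset.sum_congr rfl fun k _ => ?_
     rw [mul_assoc, hdiv k i, mul_add, mul_assoc]
   have hsum0 : (∑ k : Fin (m+1), O.C (d k) * ρ k i) = 0 := by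
     have hcoeff : ∀ j : ℕ, O.e (∑ k : Fin (m+1), O.C (d k) * ρ k i) j = 0 := by
       intro j
       rw [map_sum O.e, Finset.sum_apply']
       rw [show (∑ k : Fin (m+1), O.e (O.C (d k) * ρ k i) j)
           = ∑ k : Fin (m+1), d k * O.e (ρ k i) j from
         Finset.sum_congr rfl fun k _ => O.coeff_C_mul _ _ _]
       by_cases hjn : j < n
       · have := congrFun (congrFun hΦd i) (⟨j, hjn⟩ : Fin n)
         simpa [Φ] using this
       · push_neg at hjn
         refine Finset.sum_eq_zero fun k _ => ?_
         rw [hρ k i j hjn, mul_zero]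
     have : O.e (∑ k : Fin (m+1), O.C (d k) * ρ k i) = 0 := Finsupp.ext hcoeff
     have h2 := congrArg O.e.symm this
     rwa [O.e.symm_apply_apply, map_zero] at h2
   rw [hgc, hsum0, add_zero]
   exact Ideal.mem_span_singleton'.mpr ⟨_, rfl⟩
  have hgA : g ∈ {g : R | ∀ x : R, g * x ∈ Ideal.span {f}} := by
    rw [part1]
    simpa [Set.mem_iInter] using hmem
  exact hgA
end

section
/- Let R = D[X;σ,δ] be an Ore extension over a division ring D, generated as an algebra over its center by elements d_1, …, d_s. For a nonzero f ∈ R, the left ideal Rf is twosided (i.e., Rf equals Rf*, the bound ideal) if and only if the left remainder of f·d_i upon division by f is zero for every 1 ≤ i ≤ s. -/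
/-- if `R` is generated as an algebra over its center by `d 1, …, d s`,
then for nonzero `f` the left ideal `Rf` is twosided (i.e. `Rf = Rf*`) iff for every
`i` the left remainder of `f·dᵢ` upon division by `f` is zero, i.e. `f·dᵢ = q·f` for
some `q`. -/
theorem span_twosided_iff_rem_zero {D R : Type*} [DivisionRing D] [Ring R]
    (σ : D ≃+* D) (δ : D → D) (O : OreExt D σ δ R) (s : ℕ) (d : Fin s → R)
    (hgen : Algebra.adjoin (Subring.center R) (Set.range d) = ⊤)
    (f : R) (hf : f ≠ 0) :
    IsTwoSidedIdeal' (Ideal.span {f} : Ideal R) ↔ ∀ i, ∃ q : R, f * d i = q * f := by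
  have mem_iff : ∀ x : R, x ∈ (Ideal.span {f} : Ideal R) ↔ ∃ q, x = q * f := by
    intro x
    rw [Ideal.span, Submodule.mem_span_singleton]
    simp only [smul_eq_mul]
    exact ⟨fun ⟨a, ha⟩ => ⟨a, ha.symm⟩, fun ⟨a, ha⟩ => ⟨a, ha.symm⟩⟩
  constructor
  · intro h i
    obtain ⟨q, hq⟩ := (mem_iff _).1 (h f (Ideal.subset_span rfl) (d i))
    exact ⟨q, hq⟩
  · intro h
    have key : ∀ r : R, ∃ q, f * r = q * f := by
      let S : Subalgebra (Subring.center R) R :=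
        { carrier := {r | ∃ q, f * r = q * f}
          mul_mem' := by
            rintro a b ⟨qa, ha⟩ ⟨qb, hb⟩
            exact ⟨qa * qb, by rw [← mul_assoc, ha, mul_assoc, hb, ← mul_assoc]⟩
          add_mem' := by
            rintro a b ⟨qa, ha⟩ ⟨qb, hb⟩
            exact ⟨qa + qb, by rw [mul_add, ha, hb, add_mul]⟩
          algebraMap_mem' := by
            intro c
            exact ⟨(c : R), Subring.mem_center_iff.1 c.2 f⟩ }
      intro r
      have hle : Algebra.adjoin (Subring.center R) (Set.range d) ≤ S :=
        Algebra.adjoin_le (by rintro _ ⟨i, rfl⟩; exact h i)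
      exact hle (by rw [hgen]; trivial)
    intro x hx r
    obtain ⟨a, ha⟩ := (mem_iff x).1 hx
    obtain ⟨q, hq⟩ := key r
    exact (mem_iff _).2 ⟨a * q, by rw [ha, mul_assoc, hq, ← mul_assoc]⟩
end

section
/- Let R = D[X;σ,δ] be an Ore extension over a division ring D generated as an algebra over its center by d_1, …, d_s, and let f ∈ R be nonzero. If the left remainder of f·d_{i0} by f is nonzero for some i0, and f_{d_{i0}} generates Ann_R(d_{i0} + Rf), then the bound of the left least common multiple m = [f_{d_{i0}}, f]_ℓ generates the same twosided ideal as the bound of f (i.e., R f* = R m*), and Rm is strictly contained in Rf. -/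
/-- if the left remainder of `f·d_{i₀}` by `f` is nonzero, `f_{d_{i₀}}`
generates the annihilator of `d_{i₀} + Rf`, and `m = [f_{d_{i₀}}, f]_ℓ`, then the
bound of `m` generates the same twosided ideal as the bound of `f`, and
`Rm ⊊ Rf`. -/
theorem bound_step {D R : Type*} [DivisionRing D] [Ring R]
    (σ : D ≃+* D) (δ : D → D) (O : OreExt D σ δ R) (s : ℕ) (d : Fin s → R)
    (hgen : Algebra.adjoin (Subring.center R) (Set.range d) = ⊤)
    (f : R) (hf : f ≠ 0) (i0 : Fin s)
    (hrem : f * d i0 ∉ Ideal.span {f})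
    (fd : R) (hfd : ∀ g : R, g ∈ Ideal.span {fd} ↔ g * d i0 ∈ Ideal.span {f})
    (m : R) (hm : Ideal.span {m} = Ideal.span {fd} ⊓ Ideal.span {f})
    (bf bm : R) (hbf : IsBound f bf) (hbm : IsBound m bm) :
    Ideal.span {bf} = Ideal.span {bm} ∧
      (Ideal.span {m} : Ideal R) < Ideal.span {f} := by
  obtain ⟨hbf1, hbf2, hbf3⟩ := hbf
  obtain ⟨hbm1, hbm2, hbm3⟩ := hbm
  have hmf : Ideal.span {m} ≤ Ideal.span {f} := hm ▸ inf_le_right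
  have hbffd : Ideal.span {bf} ≤ Ideal.span {fd} := fun g hg => by
    rw [hfd]; exact hbf1 (hbf2 g hg (d i0))
  constructor
  · apply le_antisymm
    · exact hbm3 _ hbf2 (by rw [hm]; exact le_inf hbffd hbf1)
    · exact hbf3 _ hbm2 (le_trans hbm1 hmf)
  · refine lt_of_le_of_ne hmf ?_
    intro h
    apply hrem
    rw [← hfd]
    have : f ∈ Ideal.span {m} := by rw [h]; exact Ideal.mem_span_singleton_self f
    rw [hm] at this
    exact this.1
end

section
/- Let R = D[X;σ] with D a division ring, and suppose the bound of a nonzero f ∈ R has the form f* = d X^m ĝ with d ∈ D nonzero, m ≥ 1, and ĝ central with nonzero constant term. Then X divides f on the right: f = g X^m for some g ∈ R whose bound is d ĝ. -/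
namespace OreExt

variable {D R : Type*} [DivisionRing D] [Ring R] {σ : D ≃+* D}
variable (O : OreExt D σ (fun _ => 0) R)

lemma e_monomial (n : ℕ) (a : D) : O.e (O.C a * O.X ^ n) = Finsupp.single n a := by
  rw [← O.e_symm_single]; exact O.e.apply_symm_apply _

lemma e_C (a : D) : O.e (O.C a) = Finsupp.single 0 a := by
  simpa using O.e_monomial 0 a

lemma e_X_pow (n : ℕ) : O.e (O.X ^ n) = Finsupp.single n 1 := by
  simpa using O.e_monomial n 1

lemma X_pow_ne_zero (k : ℕ) : O.X ^ k ≠ 0 := by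
  intro h
  have := congrArg O.e h
  rw [e_X_pow, map_zero] at this
  exact one_ne_zero (Finsupp.single_eq_zero.mp this)

lemma X_mul_C' (a : D) : O.X * O.C a = O.C (σ a) * O.X := by
  have := O.X_mul_C a
  simpa using this

lemma X_pow_mul_C (n : ℕ) (a : D) :
    O.X ^ n * O.C a = O.C ((σ ^ n) a) * O.X ^ n := by
  induction n generalizing a with
  | zero =>
    have : ((σ ^ 0) a) = a := rfl
    rw [this, pow_zero, one_mul, mul_one]
  | succ n ih =>
    have hs : ((σ ^ (n+1)) a) = (σ ^ n) (σ a) := by rw [pow_succ]; rfl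
    rw [pow_succ, mul_assoc, X_mul_C', ← mul_assoc, ih, hs, mul_assoc]

lemma monomial_mul (a b : D) (i j : ℕ) :
    (O.C a * O.X ^ i) * (O.C b * O.X ^ j) = O.C (a * (σ ^ i) b) * O.X ^ (i + j) := by
  rw [mul_assoc, ← mul_assoc (O.X ^ i), X_pow_mul_C, mul_assoc, ← pow_add,
    ← mul_assoc, ← map_mul]

lemma coeff_C_mul_s11 (b : D) (s : R) (n : ℕ) : O.e (O.C b * s) n = b * O.e s n := by
  have key : ∀ φ : ℕ →₀ D, O.e (O.C b * O.e.symm φ) n = b * φ n := by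
    intro φ
    induction φ using Finsupp.induction with
    | zero => simp
    | single_add j c φ hj hc ih =>
      rw [map_add, mul_add, map_add, Finsupp.add_apply, Finsupp.add_apply, mul_add, ih,
        O.e_symm_single, ← mul_assoc, ← map_mul, e_monomial]
      congr 1
      rw [Finsupp.single_apply, Finsupp.single_apply]
      split <;> simp
  have := key (O.e s)
  rwa [O.e.symm_apply_apply] at this

lemma coeff_X_pow_mul_s11 (k : ℕ) (s : R) (n : ℕ) :
    O.e (O.X ^ k * s) n = if k ≤ n then (σ ^ k) (O.e s (n - k)) else 0 := by
  have key : ∀ φ : ℕ →₀ D, O.e (O.X ^ k * O.e.symm φ) n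
      = if k ≤ n then (σ ^ k) (φ (n - k)) else 0 := by
    intro φ
    induction φ using Finsupp.induction with
    | zero => simp
    | single_add j c φ hj hc ih =>
      rw [map_add, mul_add, map_add, Finsupp.add_apply, ih,
        O.e_symm_single, ← mul_assoc, X_pow_mul_C, mul_assoc, ← pow_add, e_monomial]
      rw [Finsupp.add_apply]
      have : (Finsupp.single (k + j) ((σ ^ k) c)) n
          = if k ≤ n then (σ ^ k) ((Finsupp.single j c) (n - k)) else 0 := by
        rw [Finsupp.single_apply, Finsupp.single_apply]
        split_ifs with h1 h2 h3 <;> first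
          | rfl
          | (try simp) <;> omega
      rw [this]
      split_ifs with h
      · rw [map_add]
      · rw [add_zero]
  have := key (O.e s)
  rwa [O.e.symm_apply_apply] at this

lemma coeff_mul_X_pow (r : R) (k n : ℕ) :
    O.e (r * O.X ^ k) n = if k ≤ n then O.e r (n - k) else 0 := by
  have key : ∀ φ : ℕ →₀ D, O.e (O.e.symm φ * O.X ^ k) n
      = if k ≤ n then φ (n - k) else 0 := by
    intro φ
    induction φ using Finsupp.induction with
    | zero => simp
    | single_add j c φ hj hc ih =>
      rw [map_add, add_mul, map_add, Finsupp.add_apply, ih,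
        O.e_symm_single, mul_assoc, ← pow_add, e_monomial, Finsupp.add_apply]
      have : (Finsupp.single (j + k) c) n
          = if k ≤ n then (Finsupp.single j c) (n - k) else 0 := by
        rw [Finsupp.single_apply, Finsupp.single_apply]
        split_ifs <;> first | rfl | omega
      rw [this]
      split_ifs with h
      · rfl
      · rw [add_zero]
  have := key (O.e r)
  rwa [O.e.symm_apply_apply] at this

lemma coeff_mul (r s : R) (n : ℕ) :
    O.e (r * s) n
      = (O.e r).sum fun i a => if i ≤ n then a * (σ ^ i) (O.e s (n - i)) else 0 := by
  have key : ∀ φ : ℕ →₀ D, O.e (O.e.symm φ * s) n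
      = φ.sum fun i a => if i ≤ n then a * (σ ^ i) (O.e s (n - i)) else 0 := by
    intro φ
    induction φ using Finsupp.induction with
    | zero => simp
    | single_add j c φ hj hc ih =>
      rw [map_add, add_mul, map_add, Finsupp.add_apply, ih, O.e_symm_single]
      rw [Finsupp.sum_add_index' (by intro i; simp) (by
        intro i b₁ b₂
        split_ifs
        · rw [add_mul]
        · rw [add_zero])]
      congr 1
      rw [Finsupp.sum_single_index (by simp), mul_assoc, coeff_C_mul_s11, coeff_X_pow_mul_s11,
        mul_ite, mul_zero]
  have := key (O.e r)
  rwa [O.e.symm_apply_apply] at this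

lemma coeff_mul_eq_zero {r s : R} {k l : ℕ} (hr : ∀ i < k, O.e r i = 0)
    (hs : ∀ j < l, O.e s j = 0) {n : ℕ} (hn : n < k + l) : O.e (r * s) n = 0 := by
  rw [coeff_mul, Finsupp.sum]
  apply Finset.sum_eq_zero
  intro i hi
  have hik : k ≤ i := by
    by_contra h
    exact (Finsupp.mem_support_iff.mp hi) (hr i (by omega))
  split_ifs with h
  · rw [hs (n - i) (by omega), map_zero, mul_zero]
  · rfl

lemma coeff_mul_low {r s : R} {k l : ℕ} (hr : ∀ i < k, O.e r i = 0)
    (hs : ∀ j < l, O.e s j = 0) :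
    O.e (r * s) (k + l) = O.e r k * (σ ^ k) (O.e s l) := by
  rw [coeff_mul, Finsupp.sum]
  rw [Finset.sum_eq_single k]
  · rw [if_pos (by omega)]
    have h2 : k + l - k = l := by omega
    rw [h2]
  · intro i hi hik
    have hk : k ≤ i := by
      by_contra h
      exact (Finsupp.mem_support_iff.mp hi) (hr i (by omega))
    split_ifs with h
    · rw [hs (k + l - i) (by omega), map_zero, mul_zero]
    · rfl
  · intro hk
    rw [Finsupp.notMem_support_iff.mp hk, zero_mul, if_pos (by omega)]

include O in
lemma mul_ne_zero' {r s : R} (hr : r ≠ 0) (hs : s ≠ 0) : r * s ≠ 0 := by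
  have hrn : (O.e r).support.Nonempty := by
    rw [Finsupp.support_nonempty_iff]
    intro h
    exact hr (by simpa using congrArg O.e.symm h)
  have hsn : (O.e s).support.Nonempty := by
    rw [Finsupp.support_nonempty_iff]
    intro h
    exact hs (by simpa using congrArg O.e.symm h)
  set k := (O.e r).support.min' hrn with hk
  set l := (O.e s).support.min' hsn with hl
  have hrk : O.e r k ≠ 0 := Finsupp.mem_support_iff.mp ((O.e r).support.min'_mem hrn)
  have hsl : O.e s l ≠ 0 := Finsupp.mem_support_iff.mp ((O.e s).support.min'_mem hsn)
  have hlowr : ∀ i < k, O.e r i = 0 := by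
    intro i hi
    by_contra h
    exact absurd (Finset.min'_le _ _ (Finsupp.mem_support_iff.mpr h)) (by omega)
  have hlows : ∀ j < l, O.e s j = 0 := by
    intro j hj
    by_contra h
    exact absurd (Finset.min'_le _ _ (Finsupp.mem_support_iff.mpr h)) (by omega)
  intro h0
  have := O.coeff_mul_low hlowr hlows
  rw [h0, map_zero, Finsupp.zero_apply] at this
  exact mul_ne_zero hrk ((map_ne_zero_iff _ (σ ^ k).injective).mpr hsl) this.symm

lemma mul_X_pow_cancel {a b : R} {k : ℕ} (h : a * O.X ^ k = b * O.X ^ k) : a = b := by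
  by_contra hne
  have hz : (a - b) * O.X ^ k = 0 := by rw [sub_mul, h, sub_self]
  exact O.mul_ne_zero' (sub_ne_zero.mpr hne) (O.X_pow_ne_zero k) hz

lemma exists_mul_X_pow {f : R} (k : ℕ) (h : ∀ i < k, O.e f i = 0) :
    ∃ g : R, f = g * O.X ^ k ∧ ∀ j, O.e g j = O.e f (j + k) := by
  have hinj : Set.InjOn (· + k) ((· + k) ⁻¹' ↑(O.e f).support) := fun a _ b _ hab => by simpa using hab
  refine ⟨O.e.symm (Finsupp.comapDomain (· + k) (O.e f) hinj), ?_, ?_⟩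
  · apply O.e.injective
    ext n
    rw [coeff_mul_X_pow, O.e.apply_symm_apply]
    split_ifs with hkn
    · rw [Finsupp.comapDomain_apply]
      congr 1
      omega
    · rw [h n (by omega)]
  · intro j
    rw [O.e.apply_symm_apply, Finsupp.comapDomain_apply]

/-- The coefficientwise `σ` map as an additive equiv. -/
noncomputable def tauAdd : R ≃+ R :=
  O.e.trans ((Finsupp.mapRange.addEquiv (σ : D ≃+ D)).trans O.e.symm)

lemma coeff_tauAdd (r : R) (n : ℕ) : O.e (O.tauAdd r) n = σ (O.e r n) := by
  simp [tauAdd, Finsupp.mapRange.addEquiv, Finsupp.mapRange.equiv]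
  exact Finsupp.mapRange_apply

lemma tauAdd_mul (r s : R) : O.tauAdd (r * s) = O.tauAdd r * O.tauAdd s := by
  apply O.e.injective
  ext n
  rw [coeff_tauAdd, coeff_mul, coeff_mul]
  have hsupp : (O.e (O.tauAdd r)) = Finsupp.mapRange σ (map_zero σ) (O.e r) := by
    ext i; rw [coeff_tauAdd, Finsupp.mapRange_apply]
  rw [hsupp, Finsupp.sum_mapRange_index (by intro i; simp)]
  rw [map_finsuppSum]
  apply Finsupp.sum_congr
  intro i _
  have hcomm : ∀ x : D, σ ((σ ^ i) x) = (σ ^ i) (σ x) := by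
    intro x
    have h1 : (σ ^ (i+1)) x = (σ ^ i) (σ x) := by rw [pow_succ]; rfl
    have h2 : (σ ^ (i+1)) x = σ ((σ ^ i) x) := by rw [pow_succ']; rfl
    rw [← h2, h1]
  rw [apply_ite σ, map_zero, map_mul, coeff_tauAdd, hcomm]

/-- The automorphism `τ` of `R` with `X r = τ(r) X`, given coefficientwise by `σ`. -/
noncomputable def tau : R ≃+* R :=
  { O.tauAdd with map_mul' := O.tauAdd_mul }

lemma coeff_tau (r : R) (n : ℕ) : O.e (O.tau r) n = σ (O.e r n) :=
  O.coeff_tauAdd r n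

lemma coeff_tau_symm (r : R) (n : ℕ) : O.e (O.tau.symm r) n = σ.symm (O.e r n) := by
  have := O.coeff_tau (O.tau.symm r) n
  rw [RingEquiv.apply_symm_apply] at this
  rw [this, RingEquiv.symm_apply_apply]

lemma tau_C (a : D) : O.tau (O.C a) = O.C (σ a) := by
  apply O.e.injective
  ext n
  rw [coeff_tau, e_C, e_C, Finsupp.single_apply, Finsupp.single_apply]
  split_ifs <;> simp

lemma tau_X : O.tau O.X = O.X := by
  apply O.e.injective
  ext n
  have h1 : O.e O.X = Finsupp.single 1 1 := by simpa using O.e_X_pow 1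
  rw [coeff_tau, h1]
  simp [Finsupp.single_apply]

lemma X_mul (r : R) : O.X * r = O.tau r * O.X := by
  apply O.e.injective
  ext n
  have h1 : O.X * r = O.X ^ 1 * r := by rw [pow_one]
  have h2 : O.tau r * O.X = O.tau r * O.X ^ 1 := by rw [pow_one]
  rw [h1, h2, coeff_X_pow_mul_s11, coeff_mul_X_pow]
  split_ifs with h
  · rw [coeff_tau, pow_one]
  · rfl

lemma X_pow_mul (k : ℕ) (r : R) : O.X ^ k * r = (O.tau ^ k) r * O.X ^ k := by
  induction k generalizing r with
  | zero => simp [pow_zero]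
  | succ k ih =>
    have h1 : (O.tau ^ (k+1)) r = O.tau ((O.tau ^ k) r) := by rw [pow_succ']; rfl
    rw [pow_succ', mul_assoc, ih r, ← mul_assoc, O.X_mul ((O.tau ^ k) r), h1,
      mul_assoc, ← pow_succ']

lemma tau_symm_center {c : R} (hc : c ∈ Subring.center R) :
    O.tau.symm c ∈ Subring.center R := by
  rw [Subring.mem_center_iff] at hc ⊢
  intro r
  apply O.tau.injective
  rw [map_mul, map_mul, RingEquiv.apply_symm_apply, hc (O.tau r)]

lemma twosided_span (a : D) (ha : a ≠ 0) (c : R) (hc : c ∈ Subring.center R) (k : ℕ) :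
    IsTwoSidedIdeal' (Ideal.span {O.C a * c * O.X ^ k}) := by
  intro x hx r
  obtain ⟨u, hu⟩ := Submodule.mem_span_singleton.mp hx
  rw [smul_eq_mul] at hu
  apply Submodule.mem_span_singleton.mpr
  refine ⟨u * O.C a * (O.tau ^ k) r * O.C a⁻¹, ?_⟩
  rw [smul_eq_mul, ← hu]
  have hcc : ∀ y : R, y * c = c * y := Subring.mem_center_iff.mp hc
  calc u * O.C a * (O.tau ^ k) r * O.C a⁻¹ * (O.C a * c * O.X ^ k)
      = u * O.C a * (O.tau ^ k) r * (O.C a⁻¹ * O.C a) * (c * O.X ^ k) := by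
        simp only [mul_assoc]
    _ = u * O.C a * ((O.tau ^ k) r * (c * O.X ^ k)) := by
        rw [← map_mul, inv_mul_cancel₀ ha, map_one, mul_one]
        simp only [mul_assoc]
    _ = u * O.C a * (c * ((O.tau ^ k) r * O.X ^ k)) := by
        rw [← mul_assoc ((O.tau ^ k) r), hcc ((O.tau ^ k) r)]
        simp only [mul_assoc]
    _ = u * (O.C a * c * O.X ^ k) * r := by
        rw [← X_pow_mul]
        simp only [mul_assoc]

end OreExt

/-- Right multiplication as a left-module endomorphism. -/
def rmulLin {R : Type*} [Ring R] (x : R) : R →ₗ[R] R where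
  toFun y := y * x
  map_add' a b := add_mul a b x
  map_smul' r y := by simp only [smul_eq_mul, RingHom.id_apply, mul_assoc]


/-- in `R = D[X;σ]`, if the bound of `f` is `d·X^m·ĝ` with `d ∈ D`
nonzero, `m ≥ 1` and `ĝ` central with nonzero constant term, then `f = g·X^m` for some
`g` whose bound is `d·ĝ`. -/
theorem X_pow_right_factor {D R : Type*} [DivisionRing D] [Ring R] (σ : D ≃+* D)
    (O : OreExt D σ (fun _ => 0) R) (f : R) (hf : f ≠ 0)
    (d : D) (hd : d ≠ 0) (m : ℕ) (hm : 1 ≤ m)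
    (ghat : R) (hghatC : ghat ∈ Subring.center R) (hconst : O.e ghat 0 ≠ 0)
    (hb : IsBound f (O.C d * O.X ^ m * ghat)) :
    ∃ g : R, f = g * O.X ^ m ∧ IsBound g (O.C d * ghat) := by
  classical
  obtain ⟨hb1, hb2, hb3⟩ := hb
  set b := O.C d * O.X ^ m * ghat with hbdef
  have hcomm : ∀ r : R, r * ghat = ghat * r := Subring.mem_center_iff.mp hghatC
  have hb_alt : b = O.C d * ghat * O.X ^ m := by
    rw [hbdef, mul_assoc, hcomm (O.X ^ m), ← mul_assoc]
  have hcoefb : ∀ n, O.e b n = if m ≤ n then O.e (O.C d * ghat) (n - m) else 0 := by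
    intro n; rw [hb_alt, O.coeff_mul_X_pow]
  have hdgne : O.e (O.C d * ghat) 0 ≠ 0 := by
    rw [O.coeff_C_mul_s11]; exact mul_ne_zero hd hconst
  have hlowb : ∀ n < m, O.e b n = 0 := by
    intro n hn; rw [hcoefb, if_neg (by omega)]
  have hbm : O.e b m ≠ 0 := by
    rw [hcoefb, if_pos le_rfl, Nat.sub_self]; exact hdgne
  have hbmem : b ∈ Ideal.span {f} := hb1 (Submodule.mem_span_singleton_self b)
  obtain ⟨q, hq⟩ := Submodule.mem_span_singleton.mp hbmem
  rw [smul_eq_mul] at hq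
  -- Step: `f` has all coefficients below `m` equal to zero.
  have hlowf : ∀ i < m, O.e f i = 0 := by
    by_contra hcon
    push_neg at hcon
    obtain ⟨i0, hi0m, hi0⟩ := hcon
    have hex : ∃ i, O.e f i ≠ 0 := ⟨i0, hi0⟩
    set t := Nat.find hex with htdef
    have htne : O.e f t ≠ 0 := Nat.find_spec hex
    have htlow : ∀ i < t, O.e f i = 0 := fun i hi => by
      simpa using Nat.find_min hex hi
    have htm : t < m := lt_of_le_of_lt (Nat.find_le hi0) hi0m
    obtain ⟨g1, hg1, hg1c⟩ := O.exists_mul_X_pow t htlow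
    have hg10 : O.e g1 0 ≠ 0 := by rw [hg1c 0, zero_add]; exact htne
    have hbeq : O.C d * ghat * O.X ^ (m - t) * O.X ^ t = q * g1 * O.X ^ t := by
      rw [mul_assoc (O.C d * ghat), ← pow_add]
      have hmt : m - t + t = m := by omega
      rw [hmt, ← hb_alt, ← hq, hg1, ← mul_assoc]
    have key : O.C d * ghat * O.X ^ (m - t) = q * g1 := O.mul_X_pow_cancel hbeq
    have hq0 : O.e q 0 = 0 := by
      have h1 : O.e (O.C d * ghat * O.X ^ (m - t)) 0 = 0 := by
        rw [O.coeff_mul_X_pow, if_neg (by omega)]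
      rw [key] at h1
      have h2 := O.coeff_mul_low (r := q) (s := g1) (k := 0) (l := 0)
        (fun i hi => absurd hi (Nat.not_lt_zero i)) (fun j hj => absurd hj (Nat.not_lt_zero j))
      have h3 : (σ ^ 0) (O.e g1 0) = O.e g1 0 := rfl
      have h2' : O.e (q * g1) 0 = O.e q 0 * O.e g1 0 := by
        rw [h3] at h2; exact h2
      rw [h2'] at h1
      rcases mul_eq_zero.mp h1 with h | h
      · exact h
      · exact absurd h hg10
    obtain ⟨q1, hq1, _⟩ := O.exists_mul_X_pow 1 (by
      intro i hi
      have hi0 : i = 0 := by omega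
      rw [hi0]; exact hq0)
    have e1 : q * g1 = q1 * O.tau g1 * O.X ^ 1 := by
      rw [hq1, mul_assoc, pow_one, O.X_mul g1, ← mul_assoc, ← pow_one O.X]
    have key2 : O.C d * ghat * O.X ^ (m - t - 1) = q1 * O.tau g1 := by
      apply O.mul_X_pow_cancel (k := 1)
      have ha1 : m - t - 1 + 1 = m - t := by omega
      calc O.C d * ghat * O.X ^ (m - t - 1) * O.X ^ 1
          = O.C d * ghat * O.X ^ (m - t) := by
            rw [mul_assoc (O.C d * ghat), ← pow_add, ha1]
        _ = q * g1 := key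
        _ = q1 * O.tau g1 * O.X ^ 1 := e1
    have htauf : O.tau f = O.tau g1 * O.X ^ t := by
      rw [hg1, map_mul, map_pow, O.tau_X]
    have key3 : O.C d * ghat * O.X ^ (m - 1) = q1 * O.tau f := by
      have ha2 : m - t - 1 + t = m - 1 := by omega
      calc O.C d * ghat * O.X ^ (m - 1)
          = O.C d * ghat * O.X ^ (m - t - 1) * O.X ^ t := by
            rw [mul_assoc (O.C d * ghat), ← pow_add, ha2]
        _ = q1 * O.tau g1 * O.X ^ t := by rw [key2]
        _ = q1 * O.tau f := by rw [htauf, mul_assoc]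
    set cL := O.C (σ.symm d) * O.tau.symm ghat * O.X ^ (m - 1) with hcL
    have htc : O.tau cL = O.C d * ghat * O.X ^ (m - 1) := by
      rw [hcL, map_mul, map_mul, O.tau_C, σ.apply_symm_apply, map_pow, O.tau_X,
        RingEquiv.apply_symm_apply]
    have key4 : cL = O.tau.symm q1 * f := by
      apply O.tau.injective
      rw [htc, key3, map_mul, RingEquiv.apply_symm_apply]
    have hσd : σ.symm d ≠ 0 := fun h => hd (by rw [← σ.apply_symm_apply d, h, map_zero])
    have h2s : IsTwoSidedIdeal' (Ideal.span {cL}) := by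
      rw [hcL]
      exact O.twosided_span (σ.symm d) hσd (O.tau.symm ghat) (O.tau_symm_center hghatC) (m - 1)
    have hspan_le : Ideal.span {cL} ≤ Ideal.span {f} := by
      rw [Ideal.span_le]
      refine Set.singleton_subset_iff.mpr (Submodule.mem_span_singleton.mpr ⟨O.tau.symm q1, ?_⟩)
      rw [smul_eq_mul, ← key4]
    have hcmem : cL ∈ Ideal.span {b} := hb3 _ h2s hspan_le (Submodule.mem_span_singleton_self cL)
    obtain ⟨r, hr⟩ := Submodule.mem_span_singleton.mp hcmem
    rw [smul_eq_mul] at hr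
    have hC1 : O.e cL (m - 1) ≠ 0 := by
      rw [hcL, O.coeff_mul_X_pow, if_pos le_rfl, Nat.sub_self, O.coeff_C_mul_s11, O.coeff_tau_symm]
      exact mul_ne_zero hσd ((map_ne_zero_iff _ σ.symm.injective).mpr hconst)
    have hC2 : O.e (r * b) (m - 1) = 0 :=
      O.coeff_mul_eq_zero (k := 0) (l := m) (fun i hi => absurd hi (Nat.not_lt_zero i))
        hlowb (by omega)
    exact hC1 (hr ▸ hC2)
  obtain ⟨g, hg, hgc⟩ := O.exists_mul_X_pow m hlowf
  have hkeyg : O.C d * ghat = q * g := by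
    apply O.mul_X_pow_cancel (k := m)
    rw [mul_assoc q g, ← hg, hq, hb_alt]
  refine ⟨g, hg, ?_, ?_, ?_⟩
  · rw [Ideal.span_le]
    refine Set.singleton_subset_iff.mpr (Submodule.mem_span_singleton.mpr ⟨q, ?_⟩)
    rw [smul_eq_mul, ← hkeyg]
  · have h0 : O.C d * ghat = O.C d * ghat * O.X ^ 0 := by rw [pow_zero, mul_one]
    rw [h0]
    exact O.twosided_span d hd ghat hghatC 0
  · intro J hJ hJg x hx
    set J' : Ideal R := Submodule.map (rmulLin (O.X ^ m)) J with hJ'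
    have hJ'2 : IsTwoSidedIdeal' J' := by
      rintro y hy s
      obtain ⟨z, hzJ, rfl⟩ := Submodule.mem_map.mp hy
      refine Submodule.mem_map.mpr ⟨z * (O.tau ^ m) s, hJ z hzJ _, ?_⟩
      show (z * (O.tau ^ m) s) * O.X ^ m = (z * O.X ^ m) * s
      rw [mul_assoc, mul_assoc, ← O.X_pow_mul]
    have hJ'f : J' ≤ Ideal.span {f} := by
      rintro y hy
      obtain ⟨z, hzJ, rfl⟩ := Submodule.mem_map.mp hy
      obtain ⟨r, hr⟩ := Submodule.mem_span_singleton.mp (hJg hzJ)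
      rw [smul_eq_mul] at hr
      refine Submodule.mem_span_singleton.mpr ⟨r, ?_⟩
      rw [smul_eq_mul]
      show r * f = z * O.X ^ m
      rw [hg, ← hr, mul_assoc]
    have hxm : x * O.X ^ m ∈ Ideal.span {b} :=
      hb3 J' hJ'2 hJ'f (Submodule.mem_map.mpr ⟨x, hx, rfl⟩)
    obtain ⟨r, hr⟩ := Submodule.mem_span_singleton.mp hxm
    rw [smul_eq_mul] at hr
    refine Submodule.mem_span_singleton.mpr ⟨r, ?_⟩
    rw [smul_eq_mul]
    apply O.mul_X_pow_cancel (k := m)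
    rw [← hr, hb_alt]
    simp only [mul_assoc]
end

section
/- In R = ℂ[X;σ] where σ is complex conjugation, the central polynomial f = X² + 1 is irreducible in R, is its own bound, and satisfies deg f* = deg f = 2 < 2·deg f; hence the irreducibility criterion 'f irreducible implies deg f* = μ·deg f' fails over infinite base fields. -/
namespace CCex

open OreExt Complex

/-- iterated conjugation -/
def cpow (n : ℕ) (a : ℂ) : ℂ := (fun z => (starRingEnd ℂ) z)^[n] a

lemma cpow_zero (a : ℂ) : cpow 0 a = a := rfl

lemma cpow_succ (n : ℕ) (a : ℂ) : cpow (n+1) a = (starRingEnd ℂ) (cpow n a) :=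
  Function.iterate_succ_apply' _ _ _

lemma cpow_one (a : ℂ) : cpow 1 a = (starRingEnd ℂ) a := rfl

lemma cpow_two (a : ℂ) : cpow 2 a = a := by
  rw [show (2:ℕ) = 1 + 1 from rfl, cpow_succ, cpow_one, Complex.conj_conj]

lemma cpow_map_one (n : ℕ) : cpow n 1 = 1 :=
  Function.iterate_fixed (by simp) n

lemma cpow_ne_zero (n : ℕ) {a : ℂ} (h : a ≠ 0) : cpow n a ≠ 0 := by
  induction n with
  | zero => exact h
  | succ n ih => rw [cpow_succ]; simpa using ih

variable {R : Type*} [Ring R] (O : OreExt ℂ Complex.conjAe.toRingEquiv (fun _ => 0) R)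

lemma XC (a : ℂ) : O.X * O.C a = O.C ((starRingEnd ℂ) a) * O.X := by
  have h := O.X_mul_C a
  simpa using h

lemma XpowC (n : ℕ) (a : ℂ) : O.X ^ n * O.C a = O.C (cpow n a) * O.X ^ n := by
  induction n with
  | zero => simp [cpow_zero]
  | succ n ih =>
    rw [pow_succ', mul_assoc, ih, ← mul_assoc, XC, cpow_succ, mul_assoc, ← pow_succ']

lemma term_mul (a b : ℂ) (m n : ℕ) :
    (O.C a * O.X ^ m) * (O.C b * O.X ^ n) = O.C (a * cpow m b) * O.X ^ (m + n) := by
  rw [mul_assoc, ← mul_assoc (O.X ^ m), XpowC, mul_assoc, ← pow_add, ← mul_assoc, ← map_mul]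

lemma e_term (n : ℕ) (d : ℂ) : O.e (O.C d * O.X ^ n) = Finsupp.single n d := by
  rw [← O.e_symm_single, AddEquiv.apply_symm_apply]

lemma repr (r : R) : r = (O.e r).sum fun n d => O.C d * O.X ^ n := by
  conv_lhs => rw [← O.e.symm_apply_apply r, ← Finsupp.sum_single (O.e r)]
  rw [map_finsuppSum]
  exact Finsupp.sum_congr fun n _ => O.e_symm_single n _

lemma mul_repr (g h : R) : g * h =
    (O.e g).sum fun i a => (O.e h).sum fun j b => O.C (a * cpow i b) * O.X ^ (i + j) := by
  conv_lhs => rw [repr O g, repr O h]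
  rw [Finsupp.sum_mul]
  refine Finsupp.sum_congr fun i _ => ?_
  rw [Finsupp.mul_sum]
  exact Finsupp.sum_congr fun j _ => term_mul O _ _ _ _

lemma mul_coeff (g h : R) : O.e (g * h) =
    (O.e g).sum fun i a => (O.e h).sum fun j b => Finsupp.single (i + j) (a * cpow i b) := by
  rw [mul_repr O g h, map_finsuppSum]
  refine Finsupp.sum_congr fun i _ => ?_
  rw [map_finsuppSum]
  exact Finsupp.sum_congr fun j _ => e_term O _ _

lemma le_ndeg {g : R} {i : ℕ} (h : i ∈ (O.e g).support) : i ≤ O.ndeg g := by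
  have h1 := Finset.le_max h
  rcases hm : (O.e g).support.max with _ | k
  · rw [hm] at h1; exact absurd h1 (WithBot.not_coe_le_bot _)
  · rw [hm] at h1
    have hnk : O.ndeg g = k := by rw [OreExt.ndeg, hm]; rfl
    rw [hnk]
    exact WithBot.coe_le_coe.mp h1

lemma mem_ndeg {g : R} (h : g ≠ 0) : O.ndeg g ∈ (O.e g).support := by
  have hne : (O.e g).support.Nonempty := by
    rw [Finsupp.support_nonempty_iff]
    exact fun h0 => h (by apply O.e.injective; rw [h0, map_zero])
  obtain ⟨k, hk⟩ := Finset.max_of_nonempty hne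
  have hnk : O.ndeg g = k := by simp [OreExt.ndeg, hk]
  rw [hnk]; exact Finset.mem_of_max hk

lemma eq_C_of_ndeg_zero {g : R} (h : O.ndeg g = 0) : ∃ d : ℂ, g = O.C d := by
  refine ⟨O.e g 0, ?_⟩
  have hrep : O.e g = Finsupp.single 0 (O.e g 0) := by
    ext j
    match j with
    | 0 => simp
    | (j+1) =>
      rw [Finsupp.single_apply, if_neg (by omega)]
      by_contra hne
      have := le_ndeg O (Finsupp.mem_support_iff.mpr hne)
      omega
  calc g = O.e.symm (O.e g) := (O.e.symm_apply_apply g).symm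
    _ = O.e.symm (Finsupp.single 0 (O.e g 0)) := by rw [← hrep]
    _ = O.C (O.e g 0) * O.X ^ 0 := O.e_symm_single _ _
    _ = O.C (O.e g 0) := by rw [pow_zero, mul_one]

lemma coeff_mul_top {g h : R} (hg : g ≠ 0) (hh : h ≠ 0) :
    O.e (g * h) (O.ndeg g + O.ndeg h)
      = O.e g (O.ndeg g) * cpow (O.ndeg g) (O.e h (O.ndeg h)) := by
  rw [mul_coeff O g h, Finsupp.sum_apply]
  simp only [Finsupp.sum_apply, Finsupp.sum, Finsupp.finset_sum_apply, Finsupp.single_apply]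
  rw [Finset.sum_eq_single_of_mem (O.ndeg g) (mem_ndeg O hg) (fun i hi him =>
        Finset.sum_eq_zero fun j hj => by
          have h1 := le_ndeg O hi
          have h2 := le_ndeg O hj
          rw [if_neg (by omega)]),
      Finset.sum_eq_single_of_mem (O.ndeg h) (mem_ndeg O hh) (fun j hj hjn => by
        rw [if_neg (by omega)]),
      if_pos rfl]

lemma e_f : O.e (O.X ^ 2 + 1) = Finsupp.single 2 1 + Finsupp.single 0 1 := by
  rw [show (O.X ^ 2 + 1 : R) = O.C 1 * O.X ^ 2 + O.C 1 * O.X ^ 0 by simp,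
      map_add, e_term, e_term]

lemma ndeg_f : O.ndeg (O.X ^ 2 + 1) = 2 := by
  have hs : ((Finsupp.single 2 1 + Finsupp.single 0 1 : ℕ →₀ ℂ)).support = {2} ∪ {0} := by
    rw [Finsupp.support_add_eq]
    · rw [Finsupp.support_single_ne_zero _ one_ne_zero,
          Finsupp.support_single_ne_zero _ one_ne_zero]
    · rw [Finsupp.support_single_ne_zero _ one_ne_zero,
          Finsupp.support_single_ne_zero _ one_ne_zero]
      decide
  rw [OreExt.ndeg, e_f, hs]
  decide


lemma central (r : R) : (O.X ^ 2 + 1) * r = r * (O.X ^ 2 + 1) := by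
  rw [repr O r, Finsupp.mul_sum, Finsupp.sum_mul]
  refine Finsupp.sum_congr fun n _ => ?_
  set d := O.e r n with hd
  have hL : (O.X ^ 2 + 1) * (O.C d * O.X ^ n) = O.C d * O.X ^ (2 + n) + O.C d * O.X ^ n := by
    rw [add_mul, one_mul]
    congr 1
    calc O.X ^ 2 * (O.C d * O.X ^ n) = (O.C 1 * O.X ^ 2) * (O.C d * O.X ^ n) := by
          rw [map_one, one_mul]
      _ = O.C (1 * cpow 2 d) * O.X ^ (2 + n) := term_mul O _ _ _ _
      _ = O.C d * O.X ^ (2 + n) := by rw [cpow_two, one_mul]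
  have hR : (O.C d * O.X ^ n) * (O.X ^ 2 + 1) = O.C d * O.X ^ (n + 2) + O.C d * O.X ^ n := by
    rw [mul_add, mul_one]
    congr 1
    calc (O.C d * O.X ^ n) * O.X ^ 2 = (O.C d * O.X ^ n) * (O.C 1 * O.X ^ 2) := by
          rw [map_one, one_mul]
      _ = O.C (d * cpow n 1) * O.X ^ (n + 2) := term_mul O _ _ _ _
      _ = O.C d * O.X ^ (n + 2) := by rw [cpow_map_one, mul_one]
  rw [hL, hR, add_comm 2 n]

end CCex

open CCex in
/-- in `R = ℂ[X;σ]` with `σ` complex conjugation, `f = X² + 1` is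
irreducible, is its own bound, and `deg f* = deg f = 2 < 2·deg f`, so the criterion
`f` irreducible → `deg f* = μ·deg f` fails over infinite fields. -/
theorem complex_counterexample {R : Type*} [Ring R]
    (O : OreExt ℂ Complex.conjAe.toRingEquiv (fun _ => 0) R) :
    O.IrreducibleOre (O.X ^ 2 + 1) ∧
      IsBound (O.X ^ 2 + 1) (O.X ^ 2 + 1) ∧
      O.ndeg (O.X ^ 2 + 1) = 2 ∧
      O.ndeg (O.X ^ 2 + 1) < 2 * O.ndeg (O.X ^ 2 + 1) := by
  have hnf := ndeg_f O
  refine ⟨⟨by omega, ?_⟩, ?_, hnf, by omega⟩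
  · -- irreducibility
    intro g h hf
    by_contra hcon
    push_neg at hcon
    obtain ⟨hg, hh⟩ := hcon
    have hgC : O.ndeg g ≠ 0 := fun h0 => by
      obtain ⟨d, hd⟩ := eq_C_of_ndeg_zero O h0; exact hg d hd
    have hhC : O.ndeg h ≠ 0 := fun h0 => by
      obtain ⟨d, hd⟩ := eq_C_of_ndeg_zero O h0; exact hh d hd
    have hg0 : g ≠ 0 := fun h0 => hg 0 (by rw [h0, map_zero])
    have hh0 : h ≠ 0 := fun h0 => hh 0 (by rw [h0, map_zero])
    have ha : O.e g (O.ndeg g) ≠ 0 := Finsupp.mem_support_iff.mp (mem_ndeg O hg0)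
    have hb : O.e h (O.ndeg h) ≠ 0 := Finsupp.mem_support_iff.mp (mem_ndeg O hh0)
    have hco := coeff_mul_top O hg0 hh0
    rw [← hf, e_f] at hco
    have hnz : (Finsupp.single 2 1 + Finsupp.single 0 1 : ℕ →₀ ℂ)
        (O.ndeg g + O.ndeg h) ≠ 0 := by
      rw [hco]; exact mul_ne_zero ha (cpow_ne_zero _ hb)
    have hmn : O.ndeg g + O.ndeg h = 2 := by
      by_contra hne
      apply hnz
      rw [Finsupp.add_apply, Finsupp.single_apply, Finsupp.single_apply,
        if_neg (by omega), if_neg (by omega), add_zero]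
    have hm1 : O.ndeg g = 1 := by omega
    have hn1 : O.ndeg h = 1 := by omega
    rw [hm1] at ha
    rw [hn1] at hb
    set a := O.e g 1 with ha'
    set b := O.e g 0 with hb'
    set c := O.e h 1 with hc'
    set d := O.e h 0 with hd'
    have hge : O.e g = Finsupp.single 1 a + Finsupp.single 0 b := by
      ext j
      rw [Finsupp.add_apply, Finsupp.single_apply, Finsupp.single_apply]
      match j with
      | 0 => simp [hb']
      | 1 => simp [ha']
      | (j+2) =>
        rw [if_neg (by omega), if_neg (by omega), add_zero]
        by_contra hne
        have := le_ndeg O (Finsupp.mem_support_iff.mpr hne)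
        omega
    have hhe : O.e h = Finsupp.single 1 c + Finsupp.single 0 d := by
      ext j
      rw [Finsupp.add_apply, Finsupp.single_apply, Finsupp.single_apply]
      match j with
      | 0 => simp [hd']
      | 1 => simp [hc']
      | (j+2) =>
        rw [if_neg (by omega), if_neg (by omega), add_zero]
        by_contra hne
        have := le_ndeg O (Finsupp.mem_support_iff.mpr hne)
        omega
    have hgrepr : g = O.C a * O.X ^ 1 + O.C b * O.X ^ 0 := by
      have h1 := congrArg O.e.symm hge
      rw [O.e.symm_apply_apply, map_add, O.e_symm_single, O.e_symm_single] at h1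
      exact h1
    have hhrepr : h = O.C c * O.X ^ 1 + O.C d * O.X ^ 0 := by
      have h1 := congrArg O.e.symm hhe
      rw [O.e.symm_apply_apply, map_add, O.e_symm_single, O.e_symm_single] at h1
      exact h1
    have expand : g * h = O.C (a * cpow 1 c) * O.X ^ 2
        + (O.C (a * cpow 1 d + b * c) * O.X ^ 1 + O.C (b * d) * O.X ^ 0) := by
      rw [hgrepr, hhrepr, add_mul, mul_add, mul_add, term_mul, term_mul, term_mul, term_mul,
        map_add, add_mul]
      simp only [cpow_zero]
      abel
    have heq := congrArg O.e hf
    rw [e_f, expand, map_add, map_add, e_term, e_term, e_term] at heq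
    have e2 : a * (starRingEnd ℂ) c = 1 := by
      have := congrArg (fun φ : ℕ →₀ ℂ => φ 2) heq
      simpa [Finsupp.single_apply, cpow_one] using this.symm
    have e1 : a * (starRingEnd ℂ) d + b * c = 0 := by
      have := congrArg (fun φ : ℕ →₀ ℂ => φ 1) heq
      simpa [Finsupp.single_apply, cpow_one] using this.symm
    have e0 : b * d = 1 := by
      have := congrArg (fun φ : ℕ →₀ ℂ => φ 0) heq
      simpa [Finsupp.single_apply] using this.symm
    have hbne : b ≠ 0 := fun h0 => by simp [h0] at e0
    have hc0 : c = ((starRingEnd ℂ) a)⁻¹ := by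
      have h1 := congrArg (starRingEnd ℂ) e2
      rw [map_mul, Complex.conj_conj, map_one] at h1
      exact eq_inv_of_mul_eq_one_left (by rw [mul_comm]; exact h1)
    have hdinv : d = b⁻¹ := eq_inv_of_mul_eq_one_left (by rw [mul_comm]; exact e0)
    rw [hc0, hdinv, map_inv₀] at e1
    have hca : (starRingEnd ℂ) a ≠ 0 := by simpa using ha
    have hcb : (starRingEnd ℂ) b ≠ 0 := by simpa using hbne
    have key : a * (starRingEnd ℂ) a + b * (starRingEnd ℂ) b = 0 := by
      field_simp at e1
      linear_combination e1
    have key2 : ((Complex.normSq a + Complex.normSq b : ℝ) : ℂ) = 0 := by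
      push_cast
      rw [← Complex.mul_conj, ← Complex.mul_conj]
      exact key
    have key3 : Complex.normSq a + Complex.normSq b = 0 := by exact_mod_cast key2
    have : Complex.normSq a = 0 := by
      nlinarith [Complex.normSq_nonneg a, Complex.normSq_nonneg b]
    exact ha (by simpa [Complex.normSq_eq_zero] using this)
  · -- bound
    refine ⟨le_rfl, ?_, fun J _ hJ => hJ⟩
    intro x hx r
    obtain ⟨s, rfl⟩ := Submodule.mem_span_singleton.mp hx
    apply Submodule.mem_span_singleton.mpr
    refine ⟨s * r, ?_⟩
    rw [smul_eq_mul, smul_eq_mul, mul_assoc, mul_assoc, ← central O r]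
end
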